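/- Let Y and Z be n×k real matrices with Y_norm ≠ 0 and Z_norm ≠ 0. Then the following are equivalent: (i) Y and Z are similarity-equivalent, i.e., there exist a real number a > 0, a k×k matrix Q with QᵀQ = Iₖ, and u ∈ ℝᵏ with Z = a·Y·Q + 1ₙ·uᵀ; (ii) there exists c > 0 with A_Z = c·A_Y. (Paper's Theorem 2.3(b),(c): the class of images similarity-equivalent to Y corresponds exactly to the line of positive multiples of the ellipsoid E_Y.) -/

import Mathlib

open Matrix

/-- The `n × n` centering matrix `Iₙ − (1/n)·1ₙ·1ₙᵀ`. -/
noncomputable def centerMat (n : ℕ) : Matrix (Fin n) (Fin n) ℝ :=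
  1 - Matrix.of (fun _ _ => (n : ℝ)⁻¹)

/-- The centered matrix `Y_norm = (Iₙ − (1/n)·1ₙ·1ₙᵀ)·Y`. -/
noncomputable def normMat {n k : ℕ} (Y : Matrix (Fin n) (Fin k) ℝ) :
    Matrix (Fin n) (Fin k) ℝ :=
  centerMat n * Y

/-- `A_Y = Y_norm · Y_normᵀ`. -/
noncomputable def AMat {n k : ℕ} (Y : Matrix (Fin n) (Fin k) ℝ) :
    Matrix (Fin n) (Fin n) ℝ :=
  normMat Y * (normMat Y)ᵀ

/-- The matrix `1ₙ · uᵀ` whose every row is `uᵀ`. -/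
def transMat {n k : ℕ} (u : Fin k → ℝ) : Matrix (Fin n) (Fin k) ℝ :=
  Matrix.of (fun _ j => u j)

lemma normMat_apply {n k : ℕ} (M : Matrix (Fin n) (Fin k) ℝ) (i : Fin n) (j : Fin k) :
    normMat M i j = M i j - (n : ℝ)⁻¹ * ∑ l, M l j := by
  simp only [normMat, centerMat, Matrix.mul_apply, Matrix.sub_apply, Matrix.of_apply,
    sub_mul, Finset.sum_sub_distrib, Matrix.one_apply, ite_mul, one_mul, zero_mul,
    Finset.sum_ite_eq, Finset.mem_univ, if_true, Finset.mul_sum]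

lemma normMat_transMat {n k : ℕ} (hn : n ≠ 0) (u : Fin k → ℝ) :
    normMat (transMat u : Matrix (Fin n) (Fin k) ℝ) = 0 := by
  ext i j
  rw [normMat_apply]
  simp [transMat, Finset.sum_const, hn]

lemma normMat_add {n k : ℕ} (A B : Matrix (Fin n) (Fin k) ℝ) :
    normMat (A + B) = normMat A + normMat B := by
  simp [normMat, Matrix.mul_add]

lemma normMat_smul {n k : ℕ} (a : ℝ) (A : Matrix (Fin n) (Fin k) ℝ) :
    normMat (a • A) = a • normMat A := by
  simp [normMat, Matrix.mul_smul]

lemma normMat_mul {n k : ℕ} (A : Matrix (Fin n) (Fin k) ℝ) (Q : Matrix (Fin k) (Fin k) ℝ) :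
    normMat (A * Q) = normMat A * Q := by
  simp [normMat, Matrix.mul_assoc]

lemma decompM {n k : ℕ} (M : Matrix (Fin n) (Fin k) ℝ) :
    M = normMat M + transMat (fun j => (n : ℝ)⁻¹ * ∑ l, M l j) := by
  ext i j
  rw [Matrix.add_apply, normMat_apply]
  simp [transMat]

lemma transMat_mul {n k : ℕ} (u : Fin k → ℝ) (Q : Matrix (Fin k) (Fin k) ℝ) :
    (transMat u : Matrix (Fin n) (Fin k) ℝ) * Q = transMat (u ᵥ* Q) := by
  ext i j
  simp [transMat, Matrix.mul_apply, Matrix.vecMul, dotProduct]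

lemma gram_key {n k : ℕ} (A B : Matrix (Fin n) (Fin k) ℝ) (h : A * Aᵀ = B * Bᵀ) :
    ∃ Q : Matrix (Fin k) (Fin k) ℝ, Qᵀ * Q = 1 ∧ B = A * Q := by
  classical
  set α := Matrix.toEuclideanLin Aᵀ with hα
  set β := Matrix.toEuclideanLin Bᵀ with hβ
  have hnorm : ∀ x : EuclideanSpace ℝ (Fin n), ‖α x‖ = ‖β x‖ := by
    intro x
    have hinner : ∀ M : Matrix (Fin n) (Fin k) ℝ,
        (inner ℝ ((Matrix.toEuclideanLin Mᵀ) x) ((Matrix.toEuclideanLin Mᵀ) x) : ℝ)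
          = (WithLp.equiv 2 _ x) ⬝ᵥ ((M * Mᵀ) *ᵥ (WithLp.equiv 2 _ x)) := by
      intro M
      rw [EuclideanSpace.inner_eq_star_dotProduct]
      simp [Matrix.toEuclideanLin_apply, Matrix.dotProduct_mulVec, Matrix.vecMul_transpose,
        ← Matrix.mulVec_mulVec, Matrix.dotProduct_mulVec]
      rw [← Matrix.mulVec_transpose]
    have h1 : (inner ℝ (α x) (α x) : ℝ) = inner ℝ (β x) (β x) := by
      rw [hα, hβ, hinner A, hinner B, h]
    rw [← Real.sqrt_sq (norm_nonneg (α x)), ← Real.sqrt_sq (norm_nonneg (β x))]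
    rw [← real_inner_self_eq_norm_sq, ← real_inner_self_eq_norm_sq, h1]
  have hker : LinearMap.ker α ≤ LinearMap.ker β := by
    intro x hx
    simp only [LinearMap.mem_ker] at hx ⊢
    have := hnorm x
    rw [hx, norm_zero] at this
    exact norm_eq_zero.mp this.symm
  set S := LinearMap.range α with hS
  set e := α.quotKerEquivRange with he
  set L : S →ₗ[ℝ] EuclideanSpace ℝ (Fin k) :=
    (Submodule.liftQ (LinearMap.ker α) β hker).comp e.symm.toLinearMap with hL
  have hLspec : ∀ (x : EuclideanSpace ℝ (Fin n)) (s : S), (s : EuclideanSpace ℝ (Fin k)) = α x → L s = β x := by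
    intro x s hs
    have hes : e (Submodule.Quotient.mk x) = s := by
      apply Subtype.ext
      rw [LinearMap.quotKerEquivRange_apply_mk, hs]
    rw [hL]
    simp only [LinearMap.comp_apply, LinearEquiv.coe_toLinearMap]
    rw [← hes, LinearEquiv.symm_apply_apply]
    simp
  have hLnorm : ∀ s : S, ‖L s‖ = ‖s‖ := by
    rintro ⟨s, x, rfl⟩
    rw [hLspec x ⟨α x, x, rfl⟩ rfl]
    exact (hnorm x).symm
  set LI : S →ₗᵢ[ℝ] EuclideanSpace ℝ (Fin k) := ⟨L, hLnorm⟩ with hLI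
  set T := LI.extend with hT
  set M : Matrix (Fin k) (Fin k) ℝ := Matrix.toEuclideanLin.symm T.toLinearMap with hM
  have hMT : Matrix.toEuclideanLin M = T.toLinearMap := Matrix.toEuclideanLin.apply_symm_apply _
  have hMT' : ∀ v, Matrix.toEuclideanLin M v = T v := by
    intro v; rw [hMT]; rfl
  have hText : ∀ x : EuclideanSpace ℝ (Fin n), T (α x) = β x := by
    intro x
    have h3 := LinearIsometry.extend_apply LI ⟨α x, ⟨x, rfl⟩⟩
    rw [hT]
    exact h3.trans (hLspec x ⟨α x, ⟨x, rfl⟩⟩ rfl)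
  have hBMA : Bᵀ = M * Aᵀ := by
    apply Matrix.toEuclideanLin.injective
    apply LinearMap.ext
    intro x
    have h2 : Matrix.toEuclideanLin (M * Aᵀ) x = Matrix.toEuclideanLin M (α x) := by
      simp [hα, Matrix.toEuclideanLin_apply, Matrix.mulVec_mulVec]
    rw [h2, hMT' (α x), hText x]
  have hMorth : Mᵀ * M = 1 := by
    ext i j
    have hin := T.inner_map_map ((WithLp.equiv 2 (Fin k → ℝ)).symm (Pi.single i 1))
      ((WithLp.equiv 2 (Fin k → ℝ)).symm (Pi.single j 1))
    rw [← hMT' _, ← hMT' _] at hin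
    rw [EuclideanSpace.inner_eq_star_dotProduct, EuclideanSpace.inner_eq_star_dotProduct] at hin
    simp only [WithLp.equiv_symm_apply, Matrix.toEuclideanLin_apply_piLp_toLp, WithLp.ofLp_toLp,
      star_trivial] at hin
    simp only [Matrix.mul_apply, Matrix.transpose_apply, Matrix.one_apply]
    simp [dotProduct, Matrix.mulVec, Pi.single_apply, mul_ite, ite_mul,
      Finset.sum_ite_eq, Finset.sum_ite_eq'] at hin
    rw [← hin]
    exact Finset.sum_congr rfl (fun _ _ => mul_comm _ _)
  refine ⟨Mᵀ, ?_, ?_⟩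
  · rw [Matrix.transpose_transpose]
    exact mul_eq_one_comm.mp hMorth
  · have := congrArg Matrix.transpose hBMA
    simpa [Matrix.transpose_mul] using this

theorem stmt8 (n k : ℕ) (Y Z : Matrix (Fin n) (Fin k) ℝ)
    (hY : normMat Y ≠ 0) (hZ : normMat Z ≠ 0) :
    (∃ a : ℝ, 0 < a ∧ ∃ Q : Matrix (Fin k) (Fin k) ℝ, ∃ u : Fin k → ℝ,
        Qᵀ * Q = 1 ∧ Z = a • (Y * Q) + transMat u) ↔
      (∃ c : ℝ, 0 < c ∧ AMat Z = c • AMat Y) := by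
  have hn : n ≠ 0 := by
    rintro rfl
    exact hY (by ext i j; exact absurd i.isLt (by simp))
  constructor
  · rintro ⟨a, ha, Q, u, hQ, rfl⟩
    refine ⟨a ^ 2, by positivity, ?_⟩
    have hnZ : normMat (a • (Y * Q) + transMat u) = a • (normMat Y * Q) := by
      rw [normMat_add, normMat_transMat hn, normMat_smul, normMat_mul, add_zero]
    rw [AMat, hnZ]
    have hQQ : Q * Qᵀ = 1 := mul_eq_one_comm.mp hQ
    rw [Matrix.transpose_smul, Matrix.smul_mul, Matrix.mul_smul, smul_smul,
      Matrix.transpose_mul, AMat]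
    rw [show normMat Y * Q * (Qᵀ * (normMat Y)ᵀ) = normMat Y * (Q * Qᵀ) * (normMat Y)ᵀ by
      simp [Matrix.mul_assoc], hQQ, Matrix.mul_one, sq]
  · rintro ⟨c, hc, hA⟩
    set a := Real.sqrt c with haa
    have ha : 0 < a := Real.sqrt_pos.mpr hc
    have ha2 : a ^ 2 = c := Real.sq_sqrt hc.le
    have hAB : (a • normMat Y) * (a • normMat Y)ᵀ = normMat Z * (normMat Z)ᵀ := by
      rw [Matrix.transpose_smul, Matrix.smul_mul, Matrix.mul_smul, smul_smul, ← sq, ha2]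
      exact (hA.trans rfl).symm
    obtain ⟨Q, hQ, hB⟩ := gram_key (a • normMat Y) (normMat Z) hAB
    refine ⟨a, ha, Q, (fun j => (n : ℝ)⁻¹ * ∑ l, Z l j) -
      a • ((fun j => (n : ℝ)⁻¹ * ∑ l, Y l j) ᵥ* Q), hQ, ?_⟩
    rw [Matrix.smul_mul] at hB
    have hZd := decompM Z
    have hYd := decompM Y
    set v := fun j => (n : ℝ)⁻¹ * ∑ l, Z l j
    set w := fun j => (n : ℝ)⁻¹ * ∑ l, Y l j
    have hYQ : Y * Q = normMat Y * Q + transMat (w ᵥ* Q) := by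
      conv_lhs => rw [hYd]
      rw [Matrix.add_mul, transMat_mul]
    rw [hYQ]
    conv_lhs => rw [hZd, hB]
    ext i j
    simp [transMat, smul_sub, Matrix.vecMul, dotProduct, Finset.mul_sum, mul_comm]
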